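/- arXiv:0906.4492 — 11 statements merged into one kernel-verified Lean document; each statement's English description precedes it below -/
import Mathlib

section
/- Let Γ be a set of linear arithmetic atoms over ℚ containing strict inequalities S = {0 < t₁, ..., 0 < tₙ}. Then Γ is satisfiable if and only if there exists a rational ε > 0 such that (Γ \ S) ∪ {ε ≤ t₁, ..., ε ≤ tₙ} is satisfiable. -/
/-- Γ = G ∪ {0 < t₁,...,0 < tₙ} is satisfiable iff for some rational ε > 0,
G ∪ {ε ≤ t₁,...,ε ≤ tₙ} is satisfiable. -/
theorem stmt_3 {V : Type*} (G : (V → ℚ) → Prop) (n : ℕ) (t : Fin n → (V → ℚ) → ℚ) :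
    (∃ μ, G μ ∧ ∀ i, 0 < t i μ) ↔
    (∃ ε : ℚ, 0 < ε ∧ ∃ μ, G μ ∧ ∀ i, ε ≤ t i μ) := by
  constructor
  · rintro ⟨μ, hG, ht⟩
    rcases Nat.eq_zero_or_pos n with h0 | hpos
    · exact ⟨1, one_pos, μ, hG, fun i => absurd i.2 (by omega)⟩
    · have hne : (Finset.univ : Finset (Fin n)).Nonempty := by
        simpa [Finset.univ_nonempty_iff] using Fin.pos_iff_nonempty.mp hpos
      refine ⟨Finset.univ.inf' hne (fun i => t i μ), ?_, μ, hG, ?_⟩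
      · exact (Finset.lt_inf'_iff hne).2 fun i _ => ht i
      · exact fun i => Finset.inf'_le _ (Finset.mem_univ i)
  · rintro ⟨ε, hε, μ, hG, ht⟩
    exact ⟨μ, hG, fun i => lt_of_lt_of_le hε (ht i)⟩
end

section
/- Let A and B be conjunctions of linear arithmetic constraints over ℚ, with an atom n = (0 ≠ t) belonging to A. Define A⁺ = (A \ {n}) ∪ {0 < t} and A⁻ = (A \ {n}) ∪ {0 > t}. Suppose A⁺ ∧ B and A⁻ ∧ B are both unsatisfiable, and I⁺, I⁻ are interpolants for (A⁺, B) and (A⁻, B) respectively. Then I⁺ ∨ I⁻ is an interpolant for (A, B). -/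
/-- Interpolation for negated equalities, case n = (0 ≠ t) ∈ A:
A = A' ∧ (t ≠ 0), A⁺ = A' ∧ (0 < t), A⁻ = A' ∧ (0 > t).  If A⁺ ∧ B and A⁻ ∧ B are
unsatisfiable and I⁺, I⁻ are interpolants for (A⁺,B), (A⁻,B), then I⁺ ∨ I⁻ is an
interpolant for (A,B). -/
theorem stmt_4 {V : Type*} (A' B Ip Im : (V → ℚ) → Prop) (t : (V → ℚ) → ℚ)
    (common : Set V)
    (hdepp : ∀ μ ν : V → ℚ, (∀ v ∈ common, μ v = ν v) → (Ip μ ↔ Ip ν))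
    (hdepm : ∀ μ ν : V → ℚ, (∀ v ∈ common, μ v = ν v) → (Im μ ↔ Im ν))
    (hunsatp : ∀ μ, ¬ ((A' μ ∧ 0 < t μ) ∧ B μ))
    (hunsatm : ∀ μ, ¬ ((A' μ ∧ 0 > t μ) ∧ B μ))
    (hAp : ∀ μ, A' μ ∧ 0 < t μ → Ip μ)
    (hBp : ∀ μ, ¬ (Ip μ ∧ B μ))
    (hAm : ∀ μ, A' μ ∧ 0 > t μ → Im μ)
    (hBm : ∀ μ, ¬ (Im μ ∧ B μ)) :
    (∀ μ, A' μ ∧ (0 : ℚ) ≠ t μ → (Ip μ ∨ Im μ)) ∧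
    (∀ μ, ¬ ((Ip μ ∨ Im μ) ∧ B μ)) ∧
    (∀ μ ν : V → ℚ, (∀ v ∈ common, μ v = ν v) → ((Ip μ ∨ Im μ) ↔ (Ip ν ∨ Im ν))) := by
  refine ⟨?_, ?_, ?_⟩
  · intro μ ⟨hA, hne⟩
    rcases lt_or_gt_of_ne hne with h | h
    · exact Or.inl (hAp μ ⟨hA, h⟩)
    · exact Or.inr (hAm μ ⟨hA, h⟩)
  · rintro μ ⟨h | h, hB⟩
    · exact hBp μ ⟨h, hB⟩
    · exact hBm μ ⟨h, hB⟩
  · intro μ ν h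
    exact or_congr (hdepp μ ν h) (hdepm μ ν h)
end

section
/- Let A and B be conjunctions of linear arithmetic constraints over ℚ, with an atom n = (0 ≠ t) belonging to B. Define B⁺ = (B \ {n}) ∪ {0 < t} and B⁻ = (B \ {n}) ∪ {0 > t}. Suppose A ∧ B⁺ and A ∧ B⁻ are both unsatisfiable, and I⁺, I⁻ are interpolants for (A, B⁺) and (A, B⁻) respectively. Then I⁺ ∧ I⁻ is an interpolant for (A, B). -/
/-- Interpolation for negated equalities, case n = (0 ≠ t) ∈ B:
B = B' ∧ (t ≠ 0), B⁺ = B' ∧ (0 < t), B⁻ = B' ∧ (0 > t).  If A ∧ B⁺ and A ∧ B⁻ are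
unsatisfiable and I⁺, I⁻ are interpolants for (A,B⁺), (A,B⁻), then I⁺ ∧ I⁻ is an
interpolant for (A,B). -/
theorem stmt_5 {V : Type*} (A B' Ip Im : (V → ℚ) → Prop) (t : (V → ℚ) → ℚ)
    (common : Set V)
    (hdepp : ∀ μ ν : V → ℚ, (∀ v ∈ common, μ v = ν v) → (Ip μ ↔ Ip ν))
    (hdepm : ∀ μ ν : V → ℚ, (∀ v ∈ common, μ v = ν v) → (Im μ ↔ Im ν))
    (hunsatp : ∀ μ, ¬ (A μ ∧ (B' μ ∧ 0 < t μ)))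
    (hunsatm : ∀ μ, ¬ (A μ ∧ (B' μ ∧ 0 > t μ)))
    (hAp : ∀ μ, A μ → Ip μ)
    (hBp : ∀ μ, ¬ (Ip μ ∧ (B' μ ∧ 0 < t μ)))
    (hAm : ∀ μ, A μ → Im μ)
    (hBm : ∀ μ, ¬ (Im μ ∧ (B' μ ∧ 0 > t μ))) :
    (∀ μ, A μ → (Ip μ ∧ Im μ)) ∧
    (∀ μ, ¬ ((Ip μ ∧ Im μ) ∧ (B' μ ∧ (0 : ℚ) ≠ t μ))) ∧
    (∀ μ ν : V → ℚ, (∀ v ∈ common, μ v = ν v) → ((Ip μ ∧ Im μ) ↔ (Ip ν ∧ Im ν))) := by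
  refine ⟨fun μ h => ⟨hAp μ h, hAm μ h⟩, ?_, fun μ ν h => and_congr (hdepp μ ν h) (hdepm μ ν h)⟩
  rintro μ ⟨⟨hp, hm⟩, hB, hne⟩
  rcases lt_or_gt_of_ne hne with h | h
  · exact hBp μ ⟨hp, hB, h⟩
  · exact hBm μ ⟨hm, hB, h⟩
end

section
/- In difference logic, a finite set S of constraints of the form 0 ≤ y - x + c (with x, y variables and c ∈ ℤ) is unsatisfiable over ℚ if and only if the weighted directed graph with an edge x →ᶜ y of weight c for each constraint (0 ≤ y - x + c) ∈ S contains a cycle of strictly negative total weight. -/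
open Classical in
/-- Bellman–Ford style potential: min weight of a walk of length ≤ n starting at v. -/
noncomputable def BF {V : Type*} (S : Finset (V × V × ℤ)) : ℕ → V → ℤ
  | 0, _ => 0
  | n + 1, v =>
      (S.filter (fun e => e.1 = v)).fold min 0 (fun e => e.2.2 + BF S n e.2.1)

open Classical in
lemma BF_succ {V : Type*} (S : Finset (V × V × ℤ)) (n : ℕ) (v : V) :
    BF S (n + 1) v =
      (S.filter (fun e => e.1 = v)).fold min 0 (fun e => e.2.2 + BF S n e.2.1) := rfl

namespace DL

variable {V : Type*}

def IsWalk (S : Finset (V × V × ℤ)) (l : List (V × V × ℤ)) : Prop :=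
  (∀ e ∈ l, e ∈ S) ∧
  ∀ i : ℕ, ∀ h : i + 1 < l.length, (l[i]'(by omega)).2.1 = (l[i + 1]'h).1

def Starts (v : V) (l : List (V × V × ℤ)) : Prop :=
  ∀ h : 0 < l.length, (l[0]'h).1 = v

def wt (l : List (V × V × ℤ)) : ℤ := (l.map (fun e => e.2.2)).sum

def IsCycle (S : Finset (V × V × ℤ)) (l : List (V × V × ℤ)) : Prop :=
  IsWalk S l ∧ ∃ h : 0 < l.length, (l[l.length - 1]'(by omega)).2.1 = (l[0]'h).1

lemma wt_nil : wt ([] : List (V × V × ℤ)) = 0 := rfl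

lemma wt_cons (e : V × V × ℤ) (l : List (V × V × ℤ)) : wt (e :: l) = e.2.2 + wt l := by
  simp [wt]

lemma wt_append (l r : List (V × V × ℤ)) : wt (l ++ r) = wt l + wt r := by
  simp [wt]

lemma fold_min_attains {α : Type*} (s : Finset α) (f : α → ℤ) (b : ℤ) :
    s.fold min b f = b ∨ ∃ a ∈ s, s.fold min b f = f a := by
  classical
  induction s using Finset.induction_on with
  | empty => left; simp
  | @insert a s ha ih =>
    rw [Finset.fold_insert ha]
    rcases min_cases (f a) (s.fold min b f) with ⟨h1, _⟩ | ⟨h1, _⟩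
    · right; exact ⟨a, by simp, h1⟩
    · rcases ih with h2 | ⟨c, hc, h2⟩
      · left; rw [h1, h2]
      · right; exact ⟨c, by simp [hc], h1.trans h2⟩

/-- L1: BF is realized by a walk. -/
lemma exists_walk_BF (S : Finset (V × V × ℤ)) (n : ℕ) (v : V) :
    ∃ l : List (V × V × ℤ), IsWalk S l ∧ Starts v l ∧ l.length ≤ n ∧ wt l = BF S n v := by
  classical
  induction n generalizing v with
  | zero =>
    refine ⟨[], ⟨by simp, by intro i h; simp at h⟩, ?_, by simp, rfl⟩
    intro h; simp at h
  | succ n ih =>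
    rw [BF_succ]
    rcases fold_min_attains (S.filter (fun e => e.1 = v)) (fun e => e.2.2 + BF S n e.2.1) 0 with
      h | ⟨e, he, h⟩
    · refine ⟨[], ⟨by simp, by intro i h; simp at h⟩, ?_, by simp, by simp [wt_nil, h]⟩
      intro h; simp at h
    · obtain ⟨he1, he2⟩ := Finset.mem_filter.mp he
      obtain ⟨l, ⟨hmem, hch⟩, hst, hlen, hwt⟩ := ih e.2.1
      refine ⟨e :: l, ⟨?_, ?_⟩, ?_, by simpa using hlen, ?_⟩
      · rintro x hx
        rcases List.mem_cons.mp hx with rfl | hx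
        · exact he1
        · exact hmem x hx
      · intro i hi
        match i with
        | 0 =>
          have h0 : 0 < l.length := by simpa using hi
          simpa using (hst h0).symm
        | (k + 1) =>
          have hk : k + 1 < l.length := by simpa using hi
          simpa using hch k hk
      · intro _; simpa using he2
      · rw [wt_cons, hwt, h]

/-- L2: BF is a lower bound on weights of short walks. -/
lemma BF_le_wt (S : Finset (V × V × ℤ)) (n : ℕ) :
    ∀ (v : V) (l : List (V × V × ℤ)), IsWalk S l → Starts v l → l.length ≤ n →
      BF S n v ≤ wt l := by
  classical
  induction n with
  | zero =>
    intro v l _ _ hlen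
    have : l = [] := List.length_eq_zero_iff.mp (by omega)
    simp [this, wt_nil, BF]
  | succ n ih =>
    intro v l hw hst hlen
    rw [BF_succ]
    match l with
    | [] => exact (Finset.fold_min_le _).mpr (Or.inl (by simp [wt_nil]))
    | e :: t =>
      obtain ⟨hmem, hch⟩ := hw
      have he1 : e ∈ S := hmem e (by simp)
      have he2 : e.1 = v := hst (by simp)
      have htw : IsWalk S t := by
        refine ⟨fun x hx => hmem x (by simp [hx]), fun i hi => ?_⟩
        have := hch (i + 1) (by simpa using hi)
        simpa using this
      have hts : Starts e.2.1 t := by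
        intro h0
        have := hch 0 (by simpa using h0)
        simpa using this.symm
      have := ih e.2.1 t htw hts (by simpa using hlen)
      refine (Finset.fold_min_le _).mpr (Or.inr ⟨e, Finset.mem_filter.mpr ⟨he1, he2⟩, ?_⟩)
      rw [wt_cons]
      omega

lemma splice_get {α : Type*} (l : List α) (i j m : ℕ) (hi : i ≤ j) (hj : j < l.length)
    (hm : m < i + (l.length - j)) :
    (l.take i ++ l.drop j)[m]'(by simp; omega) =
      if h : m < i then l[m]'(by omega) else l[j + (m - i)]'(by omega) := by
  have hti : (l.take i).length = i := by simp; omega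
  by_cases h : m < i
  · rw [dif_pos h, List.getElem_append_left (by omega)]
    simp [List.getElem_take]
  · rw [dif_neg h, List.getElem_append_right (by omega)]
    simp only [List.getElem_drop, hti]


/-- L3: with no negative cycles, every walk can be shortened to length ≤ K
    (K = number of possible start vertices) without increasing weight. -/
lemma getcongr {α : Type*} (l : List α) (p q : ℕ) (hp : p < l.length) (hq : q < l.length)
    (h : p = q) : l[p]'hp = l[q]'hq := by subst h; rfl

lemma shorten [DecidableEq V] (S : Finset (V × V × ℤ)) (hnc : ∀ l, IsCycle S l → 0 ≤ wt l) :
    ∀ (n : ℕ) (l : List (V × V × ℤ)) (v : V), l.length ≤ n → IsWalk S l → Starts v l →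
      ∃ l', IsWalk S l' ∧ Starts v l' ∧
        l'.length ≤ (S.image (fun e => e.1)).card ∧ wt l' ≤ wt l := by
  classical
  intro n
  induction n with
  | zero =>
    intro l v hlen hw hst
    exact ⟨l, hw, hst, by omega, le_refl _⟩
  | succ n ih =>
    intro l v hlen hw hst
    set K := (S.image (fun e => e.1)).card with hK
    by_cases hsh : l.length ≤ K
    · exact ⟨l, hw, hst, hsh, le_refl _⟩
    push_neg at hsh
    obtain ⟨hmem, hch⟩ := hw
    -- pigeonhole on start vertices
    obtain ⟨a, -, b, -, hab, heq⟩ :=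
      Finset.exists_ne_map_eq_of_card_lt_of_maps_to
        (s := (Finset.univ : Finset (Fin l.length))) (t := S.image (fun e => e.1))
        (f := fun m => (l[m.1]'m.2).1)
        (by simpa using hsh)
        (fun m _ => Finset.mem_image.mpr ⟨l[m.1]'m.2, hmem _ (List.getElem_mem _), rfl⟩)
    -- wlog a < b
    obtain ⟨i, j, hij, hj, hvij⟩ :
        ∃ (i j : ℕ) (_ : i < j) (hj : j < l.length), (l[i]'(by omega)).1 = (l[j]'hj).1 := by
      rcases lt_or_gt_of_ne (Fin.val_ne_of_ne hab) with h | h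
      · exact ⟨a.1, b.1, h, b.2, heq⟩
      · exact ⟨b.1, a.1, h, a.2, heq.symm⟩
    -- the middle cycle
    set mid : List (V × V × ℤ) := (l.drop i).take (j - i) with hmid
    have hmidlen : mid.length = j - i := by simp [hmid]; omega
    have hmidget : ∀ m : ℕ, ∀ hm : m < mid.length,
        mid[m]'hm = l[i + m]'(by simp [hmidlen] at hm; omega) := by
      intro m hm
      simp [hmid, List.getElem_take, List.getElem_drop]
    have hmidcyc : IsCycle S mid := by
      refine ⟨⟨?_, ?_⟩, ?_⟩
      · intro e he
        exact hmem e (List.mem_of_mem_drop (List.mem_of_mem_take he))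
      · intro m hm
        rw [hmidget m (by omega), hmidget (m + 1) hm]
        have : (i + m) + 1 < l.length := by simp [hmidlen] at hm; omega
        have := hch (i + m) this
        convert this using 3 <;> omega
      · refine ⟨by omega, ?_⟩
        rw [hmidget _ (by omega), hmidget 0 (by omega)]
        have h2 : (j - 1) + 1 < l.length := by omega
        have hc := hch (j - 1) h2
        have e1 : l[i + (mid.length - 1)]'(by omega) = l[j - 1]'(by omega) :=
          getcongr l _ _ _ _ (by omega)
        have e2 : l[(j - 1) + 1]'h2 = l[j]'hj := getcongr l _ _ _ _ (by omega)
        have e3 : l[i + 0]'(by omega) = l[i]'(by omega) := getcongr l _ _ _ _ (by omega)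
        rw [e1, e3, hc, e2]
        exact hvij.symm
    have hmidwt : 0 ≤ wt mid := hnc mid hmidcyc
    -- the spliced walk
    set l' : List (V × V × ℤ) := l.take i ++ l.drop j with hl'
    have hl'len : l'.length = i + (l.length - j) := by simp [hl']; omega
    have hl'get : ∀ m : ℕ, ∀ hm : m < l'.length,
        l'[m]'hm = if h : m < i then l[m]'(by omega) else l[j + (m - i)]'(by rw [hl'len] at hm; omega) := by
      intro m hm
      exact splice_get l i j m (by omega) hj (by rw [hl'len] at hm; omega)
    have hl'w : IsWalk S l' := by
      refine ⟨?_, ?_⟩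
      · intro e he
        rcases List.mem_append.mp he with h | h
        · exact hmem e (List.mem_of_mem_take h)
        · exact hmem e (List.mem_of_mem_drop h)
      · intro m hm
        rw [hl'get m (by omega), hl'get (m + 1) hm]
        rw [hl'len] at hm
        by_cases h1 : m + 1 < i
        · rw [dif_pos (by omega), dif_pos h1]
          exact hch m (by omega)
        · rw [dif_neg h1]
          by_cases h2 : m < i
          · rw [dif_pos h2]
            have hc := hch m (by omega)
            have e1 : l[m + 1]'(by omega) = l[i]'(by omega) := getcongr l _ _ _ _ (by omega)
            have e2 : l[j]'hj = l[j + (m + 1 - i)]'(by omega) := getcongr l _ _ _ _ (by omega)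
            rw [hc, e1, hvij, e2]
          · rw [dif_neg h2]
            have := hch (j + (m - i)) (by omega)
            convert this using 3 <;> omega
    have hl'st : Starts v l' := by
      intro h0
      rw [hl'get 0 h0]
      by_cases h : 0 < i
      · rw [dif_pos h]
        exact hst (by omega)
      · rw [dif_neg h]
        have e4 : l[j + (0 - i)]'(by omega) = l[j]'hj := getcongr l _ _ _ _ (by omega)
        have e5 : l[i]'(by omega) = l[0]'(by omega) := getcongr l _ _ _ _ (by omega)
        rw [e4, ← hvij, e5]
        exact hst (by omega)
    have hdecomp : l = l.take i ++ mid ++ l.drop j := by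
      rw [hmid]
      have h1 : l.take j = l.take i ++ (l.drop i).take (j - i) := by
        rw [← List.take_add]
        congr 1
        omega
      rw [← h1, List.take_append_drop]
    have hwt : wt l' ≤ wt l := by
      have h1 : wt l' = wt (l.take i) + wt (l.drop j) := wt_append _ _
      have h2 : wt l = wt (l.take i) + wt mid + wt (l.drop j) := by
        conv_lhs => rw [hdecomp]
        rw [wt_append, wt_append]
      omega
    obtain ⟨l'', hw'', hst'', hlen'', hwt''⟩ :=
      ih l' v (by rw [hl'len]; omega) hl'w hl'st
    exact ⟨l'', hw'', hst'', hlen'', le_trans hwt'' hwt⟩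


lemma BF_pot [DecidableEq V] (S : Finset (V × V × ℤ))
    (hnc : ∀ l, IsCycle S l → 0 ≤ wt l) (e : V × V × ℤ) (he : e ∈ S) :
    BF S (S.image (fun e => e.1)).card e.1 ≤
      e.2.2 + BF S (S.image (fun e => e.1)).card e.2.1 := by
  set K := (S.image (fun e => e.1)).card with hK
  have h1 : BF S (K + 1) e.1 ≤ e.2.2 + BF S K e.2.1 := by
    rw [BF_succ]
    exact (Finset.fold_min_le _).mpr
      (Or.inr ⟨e, by simp [Finset.mem_filter, he], le_refl _⟩)
  have h2 : BF S K e.1 ≤ BF S (K + 1) e.1 := by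
    obtain ⟨l, hw, hst, hlen, hwt⟩ := exists_walk_BF S (K + 1) e.1
    obtain ⟨l', hw', hst', hlen', hwt'⟩ := shorten S hnc (K + 1) l e.1 hlen hw hst
    calc BF S K e.1 ≤ wt l' := BF_le_wt S K e.1 l' hw' hst' hlen'
      _ ≤ wt l := hwt'
      _ = BF S (K + 1) e.1 := hwt
  omega

end DL

open DL in
/-- A finite set S of difference constraints 0 ≤ y - x + c (edge x →ᶜ y) is
unsatisfiable over ℚ iff the induced weighted graph has a negative-weight cycle. -/
theorem stmt_6 {V : Type*} (S : Finset (V × V × ℤ)) :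
    (¬ ∃ μ : V → ℚ, ∀ e ∈ S, 0 ≤ μ e.2.1 - μ e.1 + (e.2.2 : ℚ)) ↔
    (∃ n : ℕ, ∃ e : Fin (n + 1) → V × V × ℤ,
      (∀ i, e i ∈ S) ∧
      (∀ i : Fin (n + 1), (e i).2.1 = (e (i + 1)).1) ∧
      (∑ i, (e i).2.2) < 0) := by
  classical
  haveI : DecidableEq V := Classical.decEq V
  constructor
  · intro hunsat
    by_contra hcyc
    apply hunsat
    have hnc : ∀ l, IsCycle S l → 0 ≤ wt l := by
      intro l hc
      by_contra hneg
      push_neg at hneg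
      apply hcyc
      obtain ⟨⟨hmem, hch⟩, h0, hcy⟩ := hc
      obtain ⟨m, hm⟩ : ∃ m, l.length = m + 1 := ⟨l.length - 1, by omega⟩
      refine ⟨m, fun i => l[i.1]'(by omega), fun i => hmem _ (List.getElem_mem _), ?_, ?_⟩
      · intro i
        rcases eq_or_lt_of_le (Nat.le_of_lt_succ i.2) with hi | hi
        · have hlast : i = Fin.last m := Fin.ext hi
          have : i + 1 = 0 := by rw [hlast]; exact Fin.last_add_one m
          rw [this]
          simp only [Fin.val_zero]
          have e1 : l[i.1]'(by omega) = l[l.length - 1]'(by omega) :=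
            getcongr l _ _ _ _ (by omega)
          rw [e1]
          exact hcy
        · have hv : ((i + 1 : Fin (m + 1)) : ℕ) = i.1 + 1 := Fin.val_add_one_of_lt (by
            rw [Fin.lt_iff_val_lt_val]; simpa using hi)
          have hb : ((i + 1 : Fin (m + 1)) : ℕ) < l.length := by rw [hm]; exact (i + 1).isLt
          have e2 : l[((i + 1 : Fin (m + 1)) : ℕ)]'hb = l[i.1 + 1]'(by omega) :=
            getcongr l _ _ _ _ hv
          show (l[i.1]'(by omega)).2.1 = (l[((i + 1 : Fin (m + 1)) : ℕ)]'hb).1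
          rw [e2]
          exact hch i.1 (by omega)
      · have key : ∀ (N : ℕ) (hN : N = l.length),
            ∑ i : Fin N, (l[i.1]'(by omega)).2.2 = wt l := by
          intro N hN
          subst hN
          exact Fin.sum_univ_fun_getElem l (fun e => e.2.2)
        exact lt_of_eq_of_lt (key (m + 1) hm.symm) hneg
    set K := (S.image (fun e => e.1)).card with hK
    refine ⟨fun v => ((BF S K v : ℤ) : ℚ), ?_⟩
    intro e he
    have h := BF_pot S hnc e he
    have h' : ((BF S K e.1 : ℤ) : ℚ) ≤ ((e.2.2 + BF S K e.2.1 : ℤ) : ℚ) := by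
      exact_mod_cast h
    push_cast at h'
    linarith
  · rintro ⟨n, e, hS, hch, hsum⟩ ⟨μ, hμ⟩
    have h2 : (0 : ℚ) ≤ ∑ i : Fin (n + 1), (μ (e i).2.1 - μ (e i).1 + ((e i).2.2 : ℚ)) :=
      Finset.sum_nonneg fun i _ => hμ _ (hS i)
    have h3 : ∑ i : Fin (n + 1), (μ (e i).2.1 - μ (e i).1 + ((e i).2.2 : ℚ))
        = ((∑ i : Fin (n + 1), (e i).2.2 : ℤ) : ℚ) := by
      rw [Finset.sum_add_distrib, Finset.sum_sub_distrib]
      have h4 : ∑ i : Fin (n + 1), μ (e i).2.1 = ∑ i : Fin (n + 1), μ (e i).1 := by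
        have h5 : ∀ i, μ (e i).2.1 = μ (e (i + 1)).1 := fun i => by rw [hch i]
        rw [Finset.sum_congr rfl fun i _ => h5 i]
        exact Fintype.sum_equiv (Equiv.addRight (1 : Fin (n + 1))) _ _ (fun i => rfl)
      rw [h4]
      push_cast
      ring
    have h6 : ((∑ i : Fin (n + 1), (e i).2.2 : ℤ) : ℚ) < 0 := by exact_mod_cast hsum
    linarith
end

section
/- A finite set of difference-logic constraints 0 ≤ y - x + c with integer constants c is satisfiable over ℚ if and only if it is satisfiable over ℤ. -/
/-- A finite set of difference constraints 0 ≤ y - x + c with integer constants is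
satisfiable over ℚ iff it is satisfiable over ℤ. -/
theorem stmt_7 {V : Type*} (S : Finset (V × V × ℤ)) :
    (∃ μ : V → ℚ, ∀ e ∈ S, 0 ≤ μ e.2.1 - μ e.1 + (e.2.2 : ℚ)) ↔
    (∃ μ : V → ℤ, ∀ e ∈ S, 0 ≤ μ e.2.1 - μ e.1 + e.2.2) := by
  constructor
  · rintro ⟨μ, h⟩
    refine ⟨fun v => ⌊μ v⌋, fun e he => ?_⟩
    have h1 : μ e.1 ≤ μ e.2.1 + (e.2.2 : ℚ) := by linarith [h e he]
    have h2 : ⌊μ e.1⌋ ≤ ⌊μ e.2.1 + (e.2.2 : ℚ)⌋ := Int.floor_le_floor h1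
    rw [Int.floor_add_intCast] at h2
    linarith
  · rintro ⟨μ, h⟩
    refine ⟨fun v => (μ v : ℚ), fun e he => ?_⟩
    have := h e he
    push_cast
    exact_mod_cast this
end

section
/- Let A ∪ B be a set of difference-logic constraints whose constraint graph contains a negative-weight cycle C, with C ⊄ A and C ⊄ B. Then the conjunction of the summary constraints of the maximal A-paths of C is an interpolant for (A, B): it is entailed by A, it is jointly unsatisfiable with B, and it mentions only variables occurring in both A and B. -/
/-- `x` occurs in the set of difference constraints `S` (edges x →ᶜ y, meaning
0 ≤ y - x + c). -/
def occursIn {V : Type*} (x : V) (S : Finset (V × V × ℤ)) : Prop :=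
  ∃ e ∈ S, e.1 = x ∨ e.2.1 = x

lemma telescope_aux {V : Type*} {n : ℕ} (μ : V → ℚ) (f : Fin (n + 1) → V) :
    ∑ i : Fin n, (μ (f i.succ) - μ (f i.castSucc)) = μ (f (Fin.last n)) - μ (f 0) := by
  induction n with
  | zero => simp
  | succ n ih =>
    rw [Fin.sum_univ_castSucc]
    have h := ih (fun i => f i.castSucc)
    simp only [Fin.succ_castSucc] at h ⊢
    rw [h]
    simp [Fin.succ_last]

/-- Graph-based interpolation for difference logic.  A ∪ B has a negative cycle C,
given as m+1 consecutive segments (boundaries v j): each segment is either a single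
B-edge, or a (nonempty, maximal: followed by a B-segment) A-path q j with weights
d j and summary weight w j.  The cycle is not contained in A nor in B.  Then the
conjunction of the summary constraints 0 ≤ v(j+1) - v(j) + w j of the A-paths is an
interpolant for (A,B): entailed by A, jointly unsatisfiable with B, and its
variables (the A-path endpoints) occur both in A and in B. -/
theorem stmt_9 {V : Type*} (A B : Finset (V × V × ℤ)) (m : ℕ)
    (v : Fin (m + 1) → V) (isB : Fin (m + 1) → Bool)
    (L : Fin (m + 1) → ℕ)
    (q : ∀ j : Fin (m + 1), Fin (L j + 1) → V)
    (d : ∀ j : Fin (m + 1), Fin (L j) → ℤ)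
    (w : Fin (m + 1) → ℤ)
    (hBedge : ∀ j, isB j = true → (v j, v (j + 1), w j) ∈ B)
    (hL : ∀ j, isB j = false → 0 < L j)
    (hq0 : ∀ j, isB j = false → q j 0 = v j)
    (hqlast : ∀ j, isB j = false → q j (Fin.last (L j)) = v (j + 1))
    (hAedge : ∀ j, isB j = false → ∀ i : Fin (L j),
      (q j i.castSucc, q j i.succ, d j i) ∈ A)
    (hw : ∀ j, isB j = false → w j = ∑ i, d j i)
    (hneg : ∑ j, w j < 0)
    (hmax : ∀ j, isB j = false → isB (j + 1) = true)
    (hnotinA : ∃ j, isB j = true)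
    (hnotinB : ∃ j, isB j = false) :
    (∀ μ : V → ℚ, (∀ e ∈ A, 0 ≤ μ e.2.1 - μ e.1 + (e.2.2 : ℚ)) →
        ∀ j, isB j = false → 0 ≤ μ (v (j + 1)) - μ (v j) + (w j : ℚ)) ∧
    (∀ μ : V → ℚ,
        ¬ ((∀ j, isB j = false → 0 ≤ μ (v (j + 1)) - μ (v j) + (w j : ℚ)) ∧
           (∀ e ∈ B, 0 ≤ μ e.2.1 - μ e.1 + (e.2.2 : ℚ)))) ∧
    (∀ j, isB j = false →
        occursIn (v j) A ∧ occursIn (v j) B ∧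
        occursIn (v (j + 1)) A ∧ occursIn (v (j + 1)) B) := by
  have summary : ∀ μ : V → ℚ, (∀ e ∈ A, 0 ≤ μ e.2.1 - μ e.1 + (e.2.2 : ℚ)) →
      ∀ j, isB j = false → 0 ≤ μ (v (j + 1)) - μ (v j) + (w j : ℚ) := by
    intro μ hA j hj
    have key : μ (v (j + 1)) - μ (v j) + (w j : ℚ) =
        ∑ i : Fin (L j), (μ (q j i.succ) - μ (q j i.castSucc) + (d j i : ℚ)) := by
      rw [Finset.sum_add_distrib, telescope_aux μ (q j), hq0 j hj, hqlast j hj, hw j hj]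
      push_cast
      ring
    rw [key]
    exact Finset.sum_nonneg fun i _ => hA _ (hAedge j hj i)
  refine ⟨summary, ?_, ?_⟩
  · rintro μ ⟨h1, h2⟩
    have hterm : ∀ j, 0 ≤ μ (v (j + 1)) - μ (v j) + (w j : ℚ) := by
      intro j
      cases hb : isB j with
      | false => exact h1 j hb
      | true => exact h2 _ (hBedge j hb)
    have hsum : 0 ≤ ∑ j, (μ (v (j + 1)) - μ (v j) + (w j : ℚ)) :=
      Finset.sum_nonneg fun j _ => hterm j
    have hcyc : ∑ j, μ (v (j + 1)) = ∑ j, μ (v j) :=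
      Fintype.sum_equiv (Equiv.addRight (1 : Fin (m + 1))) _ _ (fun j => rfl)
    rw [Finset.sum_add_distrib, Finset.sum_sub_distrib, hcyc, sub_self, zero_add] at hsum
    have : (0 : ℚ) ≤ (∑ j, w j : ℤ) := by push_cast at hsum ⊢; exact hsum
    have := lt_of_lt_of_le hneg (by exact_mod_cast this)
    exact absurd this (lt_irrefl _)
  · intro j hj
    have hLj := hL j hj
    refine ⟨?_, ?_, ?_, ?_⟩
    · refine ⟨_, hAedge j hj ⟨0, hLj⟩, Or.inl ?_⟩
      have : (⟨0, hLj⟩ : Fin (L j)).castSucc = 0 := rfl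
      rw [this, hq0 j hj]
    · have hprev : isB (j - 1) = true := by
        cases hb : isB (j - 1) with
        | true => rfl
        | false =>
          have := hmax (j - 1) hb
          rw [sub_add_cancel] at this
          rw [this] at hj; exact absurd hj (by simp)
      refine ⟨_, hBedge (j - 1) hprev, Or.inr ?_⟩
      show v (j - 1 + 1) = v j
      rw [sub_add_cancel]
    · refine ⟨_, hAedge j hj ⟨L j - 1, Nat.sub_lt hLj one_pos⟩, Or.inr ?_⟩
      have : (⟨L j - 1, Nat.sub_lt hLj one_pos⟩ : Fin (L j)).succ = Fin.last (L j) := by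
        ext; simp; omega
      rw [this, hqlast j hj]
    · exact ⟨_, hBedge (j + 1) (hmax j hj), Or.inl rfl⟩
end

section
/- Over the integers, if a set of UTVPI constraints entails (via a path in the encoded difference graph) both 0 ≤ x + t + m and 0 ≤ x - t + n for a variable x and a term t, then it entails 0 ≤ x + ⌊(m+n)/2⌋ (tightening). In particular, if a path from x⁻ to x⁺ in the encoded graph has odd weight 2k+1, then the corresponding UTVPI constraints entail 0 ≤ x + k over ℤ. -/
/-- Integer tightening: if φ entails 0 ≤ x + t + m and 0 ≤ x - t + n over ℤ, it
entails 0 ≤ x + ⌊(m+n)/2⌋.  In particular, if a set ψ entails 0 ≤ 2x + (2k+1)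
(an odd-weight path from x⁻ to x⁺ in the encoded graph), it entails 0 ≤ x + k. -/
theorem stmt_11 {V : Type*} (φ : (V → ℤ) → Prop) (x : V) (t : (V → ℤ) → ℤ) (m n : ℤ)
    (h1 : ∀ μ, φ μ → 0 ≤ μ x + t μ + m)
    (h2 : ∀ μ, φ μ → 0 ≤ μ x - t μ + n) :
    (∀ μ, φ μ → 0 ≤ μ x + (m + n) / 2) ∧
    (∀ (ψ : (V → ℤ) → Prop) (k : ℤ),
      (∀ μ, ψ μ → 0 ≤ 2 * μ x + (2 * k + 1)) → ∀ μ, ψ μ → 0 ≤ μ x + k) := by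
  constructor
  · intro μ hμ
    have h3 := h1 μ hμ
    have h4 := h2 μ hμ
    have h5 : 0 ≤ 2 * μ x + (m + n) := by linarith
    have h6 : -(m + n) ≤ 2 * μ x := by linarith

    omega
  · intro ψ k h μ hμ
    have := h μ hμ
    omega
end

section
/- Let φ be a conjunction of UTVPI constraints over ℤ that is satisfiable over ℚ. Then φ is unsatisfiable over ℤ if and only if the encoded difference-constraint graph G(φ) contains a cycle C of total weight 0 passing through two vertices x⁺ᵢ and x⁻ᵢ such that the weight of the path from x⁻ᵢ to x⁺ᵢ along C is odd. -/
/-- Satisfaction over ℤ of UTVPI constraints given in five families: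
P: 0 ≤ x₂ - x₁ + k; S: 0 ≤ x₁ + x₂ + k; N: 0 ≤ -x₁ - x₂ + k; U: 0 ≤ x₁ + k;
Lo: 0 ≤ -x₁ + k. -/
def UTVPISatZ {V : Type*} (P S N : Finset (V × V × ℤ)) (U Lo : Finset (V × ℤ))
    (μ : V → ℤ) : Prop :=
  (∀ p ∈ P, 0 ≤ μ p.2.1 - μ p.1 + p.2.2) ∧
  (∀ p ∈ S, 0 ≤ μ p.1 + μ p.2.1 + p.2.2) ∧
  (∀ p ∈ N, 0 ≤ -μ p.1 - μ p.2.1 + p.2.2) ∧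
  (∀ p ∈ U, 0 ≤ μ p.1 + p.2) ∧
  (∀ p ∈ Lo, 0 ≤ -μ p.1 + p.2)

/-- Satisfaction over ℚ of the same UTVPI constraints. -/
def UTVPISatQ {V : Type*} (P S N : Finset (V × V × ℤ)) (U Lo : Finset (V × ℤ))
    (μ : V → ℚ) : Prop :=
  (∀ p ∈ P, 0 ≤ μ p.2.1 - μ p.1 + (p.2.2 : ℚ)) ∧
  (∀ p ∈ S, 0 ≤ μ p.1 + μ p.2.1 + (p.2.2 : ℚ)) ∧
  (∀ p ∈ N, 0 ≤ -μ p.1 - μ p.2.1 + (p.2.2 : ℚ)) ∧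
  (∀ p ∈ U, 0 ≤ μ p.1 + (p.2 : ℚ)) ∧
  (∀ p ∈ Lo, 0 ≤ -μ p.1 + (p.2 : ℚ))

/-- The edges of Miné's encoded difference graph, over signed vertices
x⁺ = Sum.inl x and x⁻ = Sum.inr x. -/
def UTVPIEdge {V : Type*} (P S N : Finset (V × V × ℤ)) (U Lo : Finset (V × ℤ)) :
    (V ⊕ V) → (V ⊕ V) → ℤ → Prop := fun u v c =>
  (∃ p ∈ P, u = Sum.inl p.1 ∧ v = Sum.inl p.2.1 ∧ c = p.2.2) ∨
  (∃ p ∈ P, u = Sum.inr p.2.1 ∧ v = Sum.inr p.1 ∧ c = p.2.2) ∨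
  (∃ p ∈ S, u = Sum.inr p.1 ∧ v = Sum.inl p.2.1 ∧ c = p.2.2) ∨
  (∃ p ∈ S, u = Sum.inr p.2.1 ∧ v = Sum.inl p.1 ∧ c = p.2.2) ∨
  (∃ p ∈ N, u = Sum.inl p.1 ∧ v = Sum.inr p.2.1 ∧ c = p.2.2) ∨
  (∃ p ∈ N, u = Sum.inl p.2.1 ∧ v = Sum.inr p.1 ∧ c = p.2.2) ∨
  (∃ p ∈ U, u = Sum.inr p.1 ∧ v = Sum.inl p.1 ∧ c = 2 * p.2) ∨
  (∃ p ∈ Lo, u = Sum.inl p.1 ∧ v = Sum.inr p.1 ∧ c = 2 * p.2)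

/-- A path in the encoded graph: n edges with vertex sequence q and weights w. -/
def IsEPath {V : Type*} (E : (V ⊕ V) → (V ⊕ V) → ℤ → Prop) (n : ℕ)
    (q : Fin (n + 1) → V ⊕ V) (w : Fin n → ℤ) : Prop :=
  ∀ i : Fin n, E (q i.castSucc) (q i.succ) (w i)

namespace UTVPIAux

variable {V : Type*}

/-- negation/swap on signed vertices -/
def sg : (V ⊕ V) → (V ⊕ V) := Sum.elim Sum.inr Sum.inl

@[simp] lemma sg_inl (x : V) : sg (Sum.inl x) = Sum.inr x := rfl
@[simp] lemma sg_inr (x : V) : sg (Sum.inr x) = Sum.inl x := rfl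
@[simp] lemma sg_sg (u : V ⊕ V) : sg (sg u) = u := by cases u <;> rfl

/-- inductive weighted walks -/
inductive EWalk (E : (V ⊕ V) → (V ⊕ V) → ℤ → Prop) : (V ⊕ V) → (V ⊕ V) → ℤ → Prop
  | nil (v) : EWalk E v v 0
  | cons {u v t c d} : E u v c → EWalk E v t d → EWalk E u t (c + d)

lemma EWalk.append {E : (V ⊕ V) → (V ⊕ V) → ℤ → Prop} {u v t c d}
    (h1 : EWalk E u v c) (h2 : EWalk E v t d) : EWalk E u t (c + d) := by
  induction h1 with
  | nil => simpa using h2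
  | cons e _ ih => rename_i c' d' _ _; have := EWalk.cons e (ih h2); rwa [add_assoc]

lemma EWalk.single {E : (V ⊕ V) → (V ⊕ V) → ℤ → Prop} {u v c} (h : E u v c) :
    EWalk E u v c := by simpa using EWalk.cons h (EWalk.nil v)

/-- walks yield IsEPath data -/
lemma EWalk.toPath {E : (V ⊕ V) → (V ⊕ V) → ℤ → Prop} {u v c} (h : EWalk E u v c) :
    ∃ (n : ℕ) (q : Fin (n + 1) → V ⊕ V) (w : Fin n → ℤ),
      IsEPath E n q w ∧ q 0 = u ∧ q (Fin.last n) = v ∧ (∑ i, w i) = c := by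
  induction h with
  | nil t => exact ⟨0, fun _ => t, fun i => i.elim0, fun i => i.elim0, rfl, rfl, by simp⟩
  | cons e _ ih =>
    rename_i u' v' t' c' d' _
    obtain ⟨n, q, w, hpath, hq0, hqlast, hsum⟩ := ih
    refine ⟨n + 1, Fin.cons u' q, Fin.cons c' w, ?_, ?_, ?_, ?_⟩
    · intro i
      refine Fin.cases ?_ ?_ i
      · simpa [Fin.succ_zero_eq_one, hq0] using e
      · intro j
        have h1 : (Fin.cons u' q : Fin (n+2) → V ⊕ V) (j.succ).castSucc
            = q j.castSucc := by
          rw [← Fin.succ_castSucc, Fin.cons_succ]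
        rw [h1, Fin.cons_succ, Fin.cons_succ]
        exact hpath j
    · simp
    · rw [← Fin.succ_last, Fin.cons_succ, hqlast]
    · simp [Fin.sum_cons, hsum]


/-- telescoping bound along a path, for any feasible potential into a
linear ordered add group -/
lemma path_le {α : Type*} [AddCommGroup α] [LinearOrder α] [IsOrderedAddMonoid α]
    {E : (V ⊕ V) → (V ⊕ V) → ℤ → Prop} {F : (V ⊕ V) → α} {g : ℤ → α}
    (hg : ∀ a b : ℤ, g (a + b) = g a + g b)
    (hF : ∀ u v c, E u v c → 0 ≤ F v - F u + g c) :
    ∀ (n : ℕ) (q : Fin (n + 1) → V ⊕ V) (w : Fin n → ℤ), IsEPath E n q w →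
      0 ≤ F (q (Fin.last n)) - F (q 0) + g (∑ i, w i) := by
  intro n
  induction n with
  | zero =>
    intro q w _
    have : (∑ i : Fin 0, w i) = 0 := by simp
    rw [this]
    have hg0 : g 0 = 0 := by have := hg 0 0; simpa using this
    simp [hg0]
  | succ n ih =>
    intro q w hpath
    have hpath' : IsEPath E n (q ∘ Fin.succ) (w ∘ Fin.succ) := by
      intro i
      have := hpath i.succ
      rwa [← Fin.succ_castSucc] at this
    have h1 := ih (q ∘ Fin.succ) (w ∘ Fin.succ) hpath'
    have h2 := hF _ _ _ (hpath 0)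
    have hsum : (∑ i : Fin (n+1), w i) = w 0 + ∑ i : Fin n, w i.succ :=
      Fin.sum_univ_succ w
    rw [hsum, hg]
    simp only [Function.comp] at h1
    have hlast : q (Fin.last n).succ = q (Fin.last (n+1)) := by rw [Fin.succ_last]
    rw [hlast] at h1
    have h0 : (0 : Fin (n+1)).castSucc = 0 := rfl
    rw [h0] at h2
    have key : F (q (Fin.last (n+1))) - F (q 0) + (g (w 0) + g (∑ i : Fin n, w i.succ))
        = (F (q (Fin.last (n+1))) - F (q (Fin.succ 0)) + g (∑ x : Fin n, w x.succ))
          + (F (q (Fin.succ 0)) - F (q 0) + g (w 0)) := by abel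
    rw [key]
    exact add_nonneg h1 h2


variable (P S N : Finset (V × V × ℤ)) (U Lo : Finset (V × ℤ))

lemma edge_symm {u v c} (h : UTVPIEdge P S N U Lo u v c) :
    UTVPIEdge P S N U Lo (sg v) (sg u) c := by
  rcases h with ⟨p,hp,rfl,rfl,rfl⟩|⟨p,hp,rfl,rfl,rfl⟩|⟨p,hp,rfl,rfl,rfl⟩|⟨p,hp,rfl,rfl,rfl⟩|⟨p,hp,rfl,rfl,rfl⟩|⟨p,hp,rfl,rfl,rfl⟩|⟨p,hp,rfl,rfl,rfl⟩|⟨p,hp,rfl,rfl,rfl⟩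
  · exact Or.inr (Or.inl ⟨p, hp, rfl, rfl, rfl⟩)
  · exact Or.inl ⟨p, hp, rfl, rfl, rfl⟩
  · exact Or.inr (Or.inr (Or.inr (Or.inl ⟨p, hp, rfl, rfl, rfl⟩)))
  · exact Or.inr (Or.inr (Or.inl ⟨p, hp, rfl, rfl, rfl⟩))
  · exact Or.inr (Or.inr (Or.inr (Or.inr (Or.inr (Or.inl ⟨p, hp, rfl, rfl, rfl⟩)))))
  · exact Or.inr (Or.inr (Or.inr (Or.inr (Or.inl ⟨p, hp, rfl, rfl, rfl⟩))))
  · exact Or.inr (Or.inr (Or.inr (Or.inr (Or.inr (Or.inr (Or.inl ⟨p, hp, rfl, rfl, rfl⟩))))))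
  · exact Or.inr (Or.inr (Or.inr (Or.inr (Or.inr (Or.inr (Or.inr ⟨p, hp, rfl, rfl, rfl⟩))))))

/-- the rational potential associated to a rational model -/
def gQ (μ : V → ℚ) : (V ⊕ V) → ℚ := Sum.elim μ (fun x => -μ x)

lemma gQ_feas {μ : V → ℚ} (h : UTVPISatQ P S N U Lo μ) :
    ∀ u v c, UTVPIEdge P S N U Lo u v c → 0 ≤ gQ μ v - gQ μ u + (c : ℚ) := by
  obtain ⟨h1, h2, h3, h4, h5⟩ := h
  rintro u v c (⟨p,hp,rfl,rfl,rfl⟩|⟨p,hp,rfl,rfl,rfl⟩|⟨p,hp,rfl,rfl,rfl⟩|⟨p,hp,rfl,rfl,rfl⟩|⟨p,hp,rfl,rfl,rfl⟩|⟨p,hp,rfl,rfl,rfl⟩|⟨p,hp,rfl,rfl,rfl⟩|⟨p,hp,rfl,rfl,rfl⟩)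
  · have := h1 p hp; simp only [gQ, Sum.elim_inl, Sum.elim_inr]; linarith
  · have := h1 p hp; simp only [gQ, Sum.elim_inl, Sum.elim_inr]; linarith
  · have := h2 p hp; simp only [gQ, Sum.elim_inl, Sum.elim_inr]; linarith
  · have := h2 p hp; simp only [gQ, Sum.elim_inl, Sum.elim_inr]; linarith
  · have := h3 p hp; simp only [gQ, Sum.elim_inl, Sum.elim_inr]; linarith
  · have := h3 p hp; simp only [gQ, Sum.elim_inl, Sum.elim_inr]; linarith
  · have := h4 p hp; simp only [gQ, Sum.elim_inl, Sum.elim_inr]; push_cast; linarith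
  · have := h5 p hp; simp only [gQ, Sum.elim_inl, Sum.elim_inr]; push_cast; linarith

/-- the integer potential associated to an integer model -/
def gZ (μ : V → ℤ) : (V ⊕ V) → ℤ := Sum.elim μ (fun x => -μ x)

lemma gZ_feas {μ : V → ℤ} (h : UTVPISatZ P S N U Lo μ) :
    ∀ u v c, UTVPIEdge P S N U Lo u v c → 0 ≤ gZ μ v - gZ μ u + c := by
  obtain ⟨h1, h2, h3, h4, h5⟩ := h
  rintro u v c (⟨p,hp,rfl,rfl,rfl⟩|⟨p,hp,rfl,rfl,rfl⟩|⟨p,hp,rfl,rfl,rfl⟩|⟨p,hp,rfl,rfl,rfl⟩|⟨p,hp,rfl,rfl,rfl⟩|⟨p,hp,rfl,rfl,rfl⟩|⟨p,hp,rfl,rfl,rfl⟩|⟨p,hp,rfl,rfl,rfl⟩)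
  · have := h1 p hp; simp only [gZ, Sum.elim_inl, Sum.elim_inr]; linarith
  · have := h1 p hp; simp only [gZ, Sum.elim_inl, Sum.elim_inr]; linarith
  · have := h2 p hp; simp only [gZ, Sum.elim_inl, Sum.elim_inr]; linarith
  · have := h2 p hp; simp only [gZ, Sum.elim_inl, Sum.elim_inr]; linarith
  · have := h3 p hp; simp only [gZ, Sum.elim_inl, Sum.elim_inr]; linarith
  · have := h3 p hp; simp only [gZ, Sum.elim_inl, Sum.elim_inr]; linarith
  · have := h4 p hp; simp only [gZ, Sum.elim_inl, Sum.elim_inr]; linarith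
  · have := h5 p hp; simp only [gZ, Sum.elim_inl, Sum.elim_inr]; linarith


lemma EWalk.lower {E : (V ⊕ V) → (V ⊕ V) → ℤ → Prop} {g : (V ⊕ V) → ℚ}
    (hg : ∀ u v c, E u v c → 0 ≤ g v - g u + (c : ℚ)) :
    ∀ {u v w}, EWalk E u v w → g u ≤ g v + (w : ℚ) := by
  intro u v w h
  induction h with
  | nil => simp
  | cons e _ ih =>
    have := hg _ _ _ e
    push_cast
    push_cast at ih
    linarith

/-- existence of an integral feasible potential, given a rational one -/
lemma exists_int_potential {E : (V ⊕ V) → (V ⊕ V) → ℤ → Prop} (g : (V ⊕ V) → ℚ)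
    (hg : ∀ u v c, E u v c → 0 ≤ g v - g u + (c : ℚ)) :
    ∃ f : (V ⊕ V) → ℤ, ∀ u v c, E u v c → f u ≤ f v + c := by
  have hleast : ∀ v : V ⊕ V, ∃ m : ℤ,
      (∃ u w, EWalk E v u w ∧ m = w + ⌈g u⌉) ∧
      ∀ z : ℤ, (∃ u w, EWalk E v u w ∧ z = w + ⌈g u⌉) → m ≤ z := by
    intro v
    apply Int.exists_least_of_bdd
    · refine ⟨⌈g v⌉, ?_⟩
      rintro z ⟨u, w, hw, rfl⟩
      rw [Int.ceil_le]
      have h1 : g v ≤ g u + (w : ℚ) := EWalk.lower hg hw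
      have h2 : g u ≤ (⌈g u⌉ : ℚ) := Int.le_ceil _
      push_cast
      linarith
    · exact ⟨⌈g v⌉, v, 0, EWalk.nil v, by simp⟩
  choose f hmem hle using hleast
  refine ⟨f, fun u v c hE => ?_⟩
  obtain ⟨u', w, hw, hfv⟩ := hmem v
  have : f u ≤ (c + w) + ⌈g u'⌉ := hle u _ ⟨u', c + w, EWalk.cons hE hw, rfl⟩
  omega


section TwoSat

variable {E : (V ⊕ V) → (V ⊕ V) → ℤ → Prop} {f : (V ⊕ V) → ℤ}

/-- a tight edge whose mirror edge is also tight -/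
def TEdge (E : (V ⊕ V) → (V ⊕ V) → ℤ → Prop) (f : (V ⊕ V) → ℤ) (u v : V ⊕ V) : Prop :=
  ∃ c, E u v c ∧ f u = f v + c ∧ f (sg v) = f (sg u) + c

lemma TEdge.symm (hsym : ∀ u v c, E u v c → E (sg v) (sg u) c) {u v}
    (h : TEdge E f u v) : TEdge E f (sg v) (sg u) := by
  obtain ⟨c, hE, h1, h2⟩ := h
  exact ⟨c, hsym _ _ _ hE, h2, by simpa using h1⟩

lemma rtg_symm (hsym : ∀ u v c, E u v c → E (sg v) (sg u) c) {u v}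
    (h : Relation.ReflTransGen (TEdge E f) u v) :
    Relation.ReflTransGen (TEdge E f) (sg v) (sg u) := by
  induction h with
  | refl => exact Relation.ReflTransGen.refl
  | tail _ hbc ih => exact Relation.ReflTransGen.head (hbc.symm hsym) ih

lemma rtg_walk {u v} (h : Relation.ReflTransGen (TEdge E f) u v) :
    EWalk E u v (f u - f v) := by
  induction h with
  | refl => simpa using EWalk.nil u
  | @tail b c hab hbc ih =>
    obtain ⟨d, hE, h1, _⟩ := hbc
    have := ih.append (EWalk.single hE)
    have heq : f u - f b + d = f u - f c := by omega
    rwa [heq] at this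

lemma rtg_closed {T : Set (V ⊕ V)} (hT : ∀ u v, TEdge E f u v → u ∈ T → v ∈ T)
    {u v} (h : Relation.ReflTransGen (TEdge E f) u v) (hu : u ∈ T) : v ∈ T := by
  induction h with
  | refl => exact hu
  | tail _ hbc ih => exact hT _ _ hbc ih

/-- the 2-SAT style selection of rounding directions, via Zorn's lemma -/
lemma exists_T (hsym : ∀ u v c, E u v c → E (sg v) (sg u) c)
    (H : ∀ x : V, Odd (f (Sum.inl x) - f (Sum.inr x)) →
      ¬ (Relation.ReflTransGen (TEdge E f) (Sum.inl x) (Sum.inr x) ∧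
         Relation.ReflTransGen (TEdge E f) (Sum.inr x) (Sum.inl x))) :
    ∃ T : Set (V ⊕ V), (∀ u v, TEdge E f u v → u ∈ T → v ∈ T) ∧
      (∀ x : V, Odd (f (Sum.inl x) - f (Sum.inr x)) → (Sum.inl x ∈ T ↔ Sum.inr x ∉ T)) := by
  set R := Relation.ReflTransGen (TEdge E f) with hR
  set Good : Set (Set (V ⊕ V)) :=
    {T | (∀ u v, TEdge E f u v → u ∈ T → v ∈ T) ∧
      (∀ x : V, Odd (f (Sum.inl x) - f (Sum.inr x)) → ¬(Sum.inl x ∈ T ∧ Sum.inr x ∈ T))}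
    with hGood
  have hch : ∀ c ⊆ Good, IsChain (· ⊆ ·) c → ∃ ub ∈ Good, ∀ s ∈ c, s ⊆ ub := by
    intro c hc hchain
    refine ⟨⋃₀ c, ⟨?_, ?_⟩, fun s hs => Set.subset_sUnion_of_mem hs⟩
    · rintro u v h ⟨t, ht, hu⟩
      exact ⟨t, ht, (hc ht).1 _ _ h hu⟩
    · rintro x hodd ⟨⟨t1, ht1, hu1⟩, ⟨t2, ht2, hu2⟩⟩
      rcases eq_or_ne t1 t2 with rfl | hne
      · exact (hc ht1).2 x hodd ⟨hu1, hu2⟩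
      rcases hchain ht1 ht2 hne with h12 | h21
      · exact (hc ht2).2 x hodd ⟨h12 hu1, hu2⟩
      · exact (hc ht1).2 x hodd ⟨hu1, h21 hu2⟩
  obtain ⟨T, hTmax⟩ := zorn_subset Good hch
  obtain ⟨⟨hclosed, hcons⟩, hmax⟩ := hTmax
  refine ⟨T, hclosed, fun x hodd => ?_⟩
  constructor
  · intro hl hr
    exact hcons x hodd ⟨hl, hr⟩
  · intro hr
    by_contra hl
    -- neither literal of x is in T; extend T, contradicting maximality
    have key : ∀ l : V ⊕ V, ¬ R l (sg l) → l ∉ T → sg l ∉ T → False := by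
      intro l hnot hlT hslT
      set T' : Set (V ⊕ V) := T ∪ {m | R l m} with hT'
      have hTgood : T' ∈ Good := by
        constructor
        · rintro u v h (hu | hu)
          · exact Or.inl (hclosed _ _ h hu)
          · exact Or.inr (Relation.ReflTransGen.tail hu h)
        · rintro y hy ⟨h1 | h1, h2 | h2⟩
          · exact hcons y hy ⟨h1, h2⟩
          · have : R (Sum.inl y) (sg l) := by simpa using rtg_symm hsym h2
            exact hslT (rtg_closed hclosed this h1)
          · have : R (Sum.inr y) (sg l) := by simpa using rtg_symm hsym h1
            exact hslT (rtg_closed hclosed this h2)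
          · have h3 : R (Sum.inl y) (sg l) := by simpa using rtg_symm hsym h2
            exact hnot (Relation.ReflTransGen.trans h1 h3)
      have hsub : T' ⊆ T := hmax hTgood Set.subset_union_left
      exact hlT (hsub (Or.inr Relation.ReflTransGen.refl))
    obtain hl1 | hl2 : ¬ R (Sum.inl x) (Sum.inr x) ∨ ¬ R (Sum.inr x) (Sum.inl x) := by
      by_contra hcon
      push_neg at hcon
      exact H x hodd ⟨hcon.1, hcon.2⟩
    · exact key (Sum.inl x) hl1 hl hr
    · exact key (Sum.inr x) hl2 hr hl

end TwoSat

end UTVPIAux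

/-- Lahiri–Musuvathi: a ℚ-satisfiable conjunction φ of UTVPI constraints is
ℤ-unsatisfiable iff the encoded graph G(φ) has a zero-weight cycle through some
x⁺ and x⁻ such that the path from x⁻ to x⁺ along the cycle has odd weight. -/
theorem stmt_12 {V : Type*} (P S N : Finset (V × V × ℤ)) (U Lo : Finset (V × ℤ))
    (hQ : ∃ μ : V → ℚ, UTVPISatQ P S N U Lo μ) :
    (¬ ∃ μ : V → ℤ, UTVPISatZ P S N U Lo μ) ↔
    (∃ (x : V) (n₁ n₂ : ℕ) (q₁ : Fin (n₁ + 1) → V ⊕ V) (w₁ : Fin n₁ → ℤ)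
       (q₂ : Fin (n₂ + 1) → V ⊕ V) (w₂ : Fin n₂ → ℤ),
      IsEPath (UTVPIEdge P S N U Lo) n₁ q₁ w₁ ∧
      IsEPath (UTVPIEdge P S N U Lo) n₂ q₂ w₂ ∧
      q₁ 0 = Sum.inr x ∧ q₁ (Fin.last n₁) = Sum.inl x ∧
      q₂ 0 = Sum.inl x ∧ q₂ (Fin.last n₂) = Sum.inr x ∧
      (∑ i, w₁ i) + (∑ i, w₂ i) = 0 ∧ Odd (∑ i, w₁ i)) := by
  classical
  obtain ⟨μQ, hμQ⟩ := hQ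
  set E := UTVPIEdge P S N U Lo with hE
  constructor
  · -- hard direction: Z-unsat implies the odd zero cycle
    intro hunsat
    by_contra hno
    apply hunsat
    obtain ⟨f, hf⟩ := UTVPIAux.exists_int_potential (UTVPIAux.gQ μQ)
      (UTVPIAux.gQ_feas P S N U Lo hμQ)
    have hsym : ∀ u v c, E u v c → E (UTVPIAux.sg v) (UTVPIAux.sg u) c :=
      fun u v c h => UTVPIAux.edge_symm P S N U Lo h
    -- no double tight-reachability between x⁺ and x⁻ for odd x
    have H : ∀ x : V, Odd (f (Sum.inl x) - f (Sum.inr x)) →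
        ¬ (Relation.ReflTransGen (UTVPIAux.TEdge E f) (Sum.inl x) (Sum.inr x) ∧
           Relation.ReflTransGen (UTVPIAux.TEdge E f) (Sum.inr x) (Sum.inl x)) := by
      rintro x hodd ⟨h1, h2⟩
      apply hno
      have w1 := (UTVPIAux.rtg_walk h2).toPath
      have w2 := (UTVPIAux.rtg_walk h1).toPath
      obtain ⟨n₁, q₁, wt₁, hp1, h10, h1l, h1s⟩ := w1
      obtain ⟨n₂, q₂, wt₂, hp2, h20, h2l, h2s⟩ := w2
      refine ⟨x, n₁, n₂, q₁, wt₁, q₂, wt₂, hp1, hp2, h10, h1l, h20, h2l, by omega, ?_⟩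
      rw [h1s]
      obtain ⟨k, hk⟩ := hodd
      exact ⟨-k - 1, by omega⟩
    obtain ⟨T, hTclosed, hTtotal⟩ := UTVPIAux.exists_T hsym H
    set D : V → ℤ := fun x => f (Sum.inl x) - f (Sum.inr x) with hD
    set e : V → ℤ := fun x => if Odd (D x) then (if Sum.inl x ∈ T then 1 else -1) else 0
      with he
    set μ : V → ℤ := fun x => (D x + e x) / 2 with hμdef
    have hebound : ∀ x, -1 ≤ e x ∧ e x ≤ 1 := by
      intro x; rw [he]; dsimp only; split <;> [skip; omega]; split <;> omega
    have heeven : ∀ x, ¬ Odd (D x) → e x = 0 := by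
      intro x hx; rw [he]; dsimp only; rw [if_neg hx]
    have heodd1 : ∀ x, Odd (D x) → Sum.inl x ∈ T → e x = 1 := by
      intro x hx hm; rw [he]; dsimp only; rw [if_pos hx, if_pos hm]
    have heoddm : ∀ x, Odd (D x) → Sum.inl x ∉ T → e x = -1 := by
      intro x hx hm; rw [he]; dsimp only; rw [if_pos hx, if_neg hm]
    have h2μ : ∀ x, 2 * μ x = D x + e x := by
      intro x
      rcases Int.even_or_odd (D x) with hev | hod
      · have h0 : e x = 0 := heeven x (Int.not_odd_iff_even.mpr hev)
        obtain ⟨m, hm⟩ := hev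
        rw [hμdef]; dsimp only; omega
      · have h1 : e x = 1 ∨ e x = -1 := by
          by_cases hm : Sum.inl x ∈ T
          · exact Or.inl (heodd1 x hod hm)
          · exact Or.inr (heoddm x hod hm)
        obtain ⟨m, hm⟩ := hod
        rw [hμdef]; dsimp only; omega
    -- the adjusted value at a literal
    set e' : (V ⊕ V) → ℤ := Sum.elim e (fun x => -e x) with he'
    have he'bound : ∀ l, -1 ≤ e' l ∧ e' l ≤ 1 := by
      intro l; cases l with
      | inl x => simpa [he'] using hebound x
      | inr x => have := hebound x; simp [he']; omega
    have he'even : ∀ l, ¬ Odd (f l - f (UTVPIAux.sg l)) → e' l = 0 := by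
      intro l hl; cases l with
      | inl x => simpa [he'] using heeven x hl
      | inr x =>
        have : ¬ Odd (D x) := by
          rw [hD]; dsimp only
          intro ⟨k, hk⟩
          exact hl ⟨-k - 1, by simp at hk ⊢; omega⟩
        simp [he', heeven x this]
    have he'odd1 : ∀ l, Odd (f l - f (UTVPIAux.sg l)) → l ∈ T → e' l = 1 := by
      intro l hl hm; cases l with
      | inl x => simpa [he'] using heodd1 x hl hm
      | inr x =>
        have hodd : Odd (D x) := by
          rw [hD]; dsimp only
          obtain ⟨k, hk⟩ := hl
          exact ⟨-k - 1, by simp at hk ⊢; omega⟩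
        have hnotl : Sum.inl x ∉ T := by
          intro hc
          exact ((hTtotal x hodd).1 hc) hm
        simp [he', heoddm x hodd hnotl]
    have he'oddm : ∀ l, Odd (f l - f (UTVPIAux.sg l)) → l ∉ T → e' l = -1 := by
      intro l hl hm; cases l with
      | inl x => simpa [he'] using heoddm x hl hm
      | inr x =>
        have hodd : Odd (D x) := by
          rw [hD]; dsimp only
          obtain ⟨k, hk⟩ := hl
          exact ⟨-k - 1, by simp at hk ⊢; omega⟩
        have hinl : Sum.inl x ∈ T := (hTtotal x hodd).mpr hm
        simp [he', heodd1 x hodd hinl]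
    -- key inequality for binary constraints
    have keyA : ∀ u v c, E u v c → E (UTVPIAux.sg v) (UTVPIAux.sg u) c →
        0 ≤ (f v - f (UTVPIAux.sg v) + e' v) - (f u - f (UTVPIAux.sg u) + e' u) + 2 * c := by
      intro u v c hE1 hE2
      have ha : f u ≤ f v + c := hf _ _ _ hE1
      have hb : f (UTVPIAux.sg v) ≤ f (UTVPIAux.sg u) + c := by
        have := hf _ _ _ hE2
        simpa using this
      set a : ℤ := f v - f u + c with haa
      set b : ℤ := f (UTVPIAux.sg u) - f (UTVPIAux.sg v) + c with hbb
      have ha0 : 0 ≤ a := by omega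
      have hb0 : 0 ≤ b := by omega
      have hbu := he'bound u
      have hbv := he'bound v
      rcases (by omega : a + b = 0 ∨ a + b = 1 ∨ 2 ≤ a + b) with h0 | h1 | h2
      · -- both edges tight; mirror-tight edge
        have hte : UTVPIAux.TEdge E f u v := ⟨c, hE1, by omega, by omega⟩
        by_cases hou : Odd (f u - f (UTVPIAux.sg u))
        · have hov : Odd (f v - f (UTVPIAux.sg v)) := by
            obtain ⟨k, hk⟩ := hou
            exact ⟨k - c, by omega⟩
          by_cases hmem : u ∈ T
          · have hmv : v ∈ T := hTclosed _ _ hte hmem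
            rw [he'odd1 u hou hmem, he'odd1 v hov hmv]; omega
          · rw [he'oddm u hou hmem]; omega
        · have hov : ¬ Odd (f v - f (UTVPIAux.sg v)) := by
            intro ⟨k, hk⟩
            exact hou ⟨k + c, by omega⟩
          rw [he'even u hou, he'even v hov]; omega
      · -- parities differ
        by_cases hou : Odd (f u - f (UTVPIAux.sg u))
        · have hov : ¬ Odd (f v - f (UTVPIAux.sg v)) := by
            intro ⟨k, hk⟩
            obtain ⟨m, hm⟩ := hou
            omega
          rw [he'even v hov]; omega
        · rw [he'even u hou]; omega
      · omega
    refine ⟨μ, ?_, ?_, ?_, ?_, ?_⟩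
    · -- P family
      intro p hp
      have hE1 : E (Sum.inl p.1) (Sum.inl p.2.1) p.2.2 := Or.inl ⟨p, hp, rfl, rfl, rfl⟩
      have hE2 : E (Sum.inr p.2.1) (Sum.inr p.1) p.2.2 :=
        Or.inr (Or.inl ⟨p, hp, rfl, rfl, rfl⟩)
      have hA := keyA _ _ _ hE1 hE2
      simp only [UTVPIAux.sg_inl, he', Sum.elim_inl] at hA
      have h1 := h2μ p.1
      have h2 := h2μ p.2.1
      rw [hD] at h1 h2; dsimp only at h1 h2
      omega
    · -- S family
      intro p hp
      have hE1 : E (Sum.inr p.1) (Sum.inl p.2.1) p.2.2 :=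
        Or.inr (Or.inr (Or.inl ⟨p, hp, rfl, rfl, rfl⟩))
      have hE2 : E (Sum.inr p.2.1) (Sum.inl p.1) p.2.2 :=
        Or.inr (Or.inr (Or.inr (Or.inl ⟨p, hp, rfl, rfl, rfl⟩)))
      have hA := keyA _ _ _ hE1 hE2
      simp only [UTVPIAux.sg_inl, UTVPIAux.sg_inr, he', Sum.elim_inl, Sum.elim_inr] at hA
      have h1 := h2μ p.1
      have h2 := h2μ p.2.1
      rw [hD] at h1 h2; dsimp only at h1 h2
      omega
    · -- N family
      intro p hp
      have hE1 : E (Sum.inl p.1) (Sum.inr p.2.1) p.2.2 :=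
        Or.inr (Or.inr (Or.inr (Or.inr (Or.inl ⟨p, hp, rfl, rfl, rfl⟩))))
      have hE2 : E (Sum.inl p.2.1) (Sum.inr p.1) p.2.2 :=
        Or.inr (Or.inr (Or.inr (Or.inr (Or.inr (Or.inl ⟨p, hp, rfl, rfl, rfl⟩)))))
      have hA := keyA _ _ _ hE1 hE2
      simp only [UTVPIAux.sg_inl, UTVPIAux.sg_inr, he', Sum.elim_inl, Sum.elim_inr] at hA
      have h1 := h2μ p.1
      have h2 := h2μ p.2.1
      rw [hD] at h1 h2; dsimp only at h1 h2
      omega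
    · -- U family
      intro p hp
      have hE1 : E (Sum.inr p.1) (Sum.inl p.1) (2 * p.2) :=
        Or.inr (Or.inr (Or.inr (Or.inr (Or.inr (Or.inr (Or.inl ⟨p, hp, rfl, rfl, rfl⟩))))))
      have hfe : f (Sum.inr p.1) ≤ f (Sum.inl p.1) + 2 * p.2 := hf _ _ _ hE1
      have h1 := h2μ p.1
      have hb := hebound p.1
      have hmod : D p.1 % 2 = 1 ∨ e p.1 = 0 := by
        rcases Int.even_or_odd (D p.1) with hev | hod
        · exact Or.inr (heeven p.1 (Int.not_odd_iff_even.mpr hev))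
        · exact Or.inl (Int.odd_iff.mp hod)
      rw [hD] at h1 hmod; dsimp only at h1 hmod
      omega
    · -- Lo family
      intro p hp
      have hE1 : E (Sum.inl p.1) (Sum.inr p.1) (2 * p.2) :=
        Or.inr (Or.inr (Or.inr (Or.inr (Or.inr (Or.inr (Or.inr ⟨p, hp, rfl, rfl, rfl⟩))))))
      have hfe : f (Sum.inl p.1) ≤ f (Sum.inr p.1) + 2 * p.2 := hf _ _ _ hE1
      have h1 := h2μ p.1
      have hb := hebound p.1
      have hmod : D p.1 % 2 = 1 ∨ e p.1 = 0 := by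
        rcases Int.even_or_odd (D p.1) with hev | hod
        · exact Or.inr (heeven p.1 (Int.not_odd_iff_even.mpr hev))
        · exact Or.inl (Int.odd_iff.mp hod)
      rw [hD] at h1 hmod; dsimp only at h1 hmod
      omega
  · -- easy direction
    rintro ⟨x, n₁, n₂, q₁, w₁, q₂, w₂, hp1, hp2, h10, h1l, h20, h2l, hsum, hodd⟩
    rintro ⟨μ, hμ⟩
    have hfeas := UTVPIAux.gZ_feas P S N U Lo hμ
    have hg : ∀ a b : ℤ, (id (a + b) : ℤ) = id a + id b := fun a b => rfl
    have b1 := UTVPIAux.path_le (F := UTVPIAux.gZ μ) (g := id) hg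
      (fun u v c h => hfeas u v c h) n₁ q₁ w₁ hp1
    have b2 := UTVPIAux.path_le (F := UTVPIAux.gZ μ) (g := id) hg
      (fun u v c h => hfeas u v c h) n₂ q₂ w₂ hp2
    rw [h10, h1l] at b1
    rw [h20, h2l] at b2
    simp only [UTVPIAux.gZ, Sum.elim_inl, Sum.elim_inr, id] at b1 b2
    obtain ⟨k, hk⟩ := hodd
    omega
end

section
/- (Soundness of the 'if' direction of Theorem on UTVPI integer unsatisfiability) If the encoded difference graph of a set φ of integer UTVPI constraints contains a zero-weight cycle through x⁺ and x⁻ in which the path x⁻ ⤳ x⁺ has weight 2k+1 (hence the path x⁺ ⤳ x⁻ has weight -2k-1), then φ entails both 0 ≤ x + k and 0 ≤ -x - k - 1 over ℤ, and hence φ is unsatisfiable over ℤ. -/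
def Ups {V : Type*} (μ : V → ℤ) : V ⊕ V → ℤ
  | Sum.inl v => μ v
  | Sum.inr v => -μ v

lemma edge_sound {V : Type*} (P S N : Finset (V × V × ℤ)) (U Lo : Finset (V × ℤ))
    (μ : V → ℤ) (h : UTVPISatZ P S N U Lo μ) {u v : V ⊕ V} {c : ℤ}
    (he : UTVPIEdge P S N U Lo u v c) : 0 ≤ Ups μ v - Ups μ u + c := by
  obtain ⟨hP, hS, hN, hU, hLo⟩ := h
  rcases he with ⟨p, hp, rfl, rfl, rfl⟩ | ⟨p, hp, rfl, rfl, rfl⟩ | ⟨p, hp, rfl, rfl, rfl⟩ |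
    ⟨p, hp, rfl, rfl, rfl⟩ | ⟨p, hp, rfl, rfl, rfl⟩ | ⟨p, hp, rfl, rfl, rfl⟩ |
    ⟨p, hp, rfl, rfl, rfl⟩ | ⟨p, hp, rfl, rfl, rfl⟩ <;>
    simp only [Ups] <;>
    first
    | (have := hP p hp; linarith)
    | (have := hS p hp; linarith)
    | (have := hN p hp; linarith)
    | (have := hU p hp; linarith)
    | (have := hLo p hp; linarith)

lemma path_sound {V : Type*} (P S N : Finset (V × V × ℤ)) (U Lo : Finset (V × ℤ))
    (μ : V → ℤ) (h : UTVPISatZ P S N U Lo μ) :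
    ∀ (n : ℕ) (q : Fin (n + 1) → V ⊕ V) (w : Fin n → ℤ),
      IsEPath (UTVPIEdge P S N U Lo) n q w →
      0 ≤ Ups μ (q (Fin.last n)) - Ups μ (q 0) + ∑ i, w i := by
  intro n
  induction n with
  | zero => intro q w _; simp [Fin.last]
  | succ n ih =>
    intro q w hp
    have hrest := ih (fun i => q i.castSucc) (fun i => w i.castSucc) ?_
    · have hlast := edge_sound P S N U Lo μ h (hp (Fin.last n))
      rw [Fin.sum_univ_castSucc]
      have e1 : (Fin.last n).succ = Fin.last (n + 1) := rfl
      have e2 : ((0 : Fin (n+1)).castSucc) = (0 : Fin (n+2)) := rfl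
      simp only [e1] at hlast
      simp only [Fin.castSucc_zero] at hrest
      linarith
    · intro i
      have := hp i.castSucc
      simpa only [Fin.succ_castSucc] using this

/-- Soundness of the 'if' direction: if the encoded graph of φ has a zero-weight
cycle through x⁺ and x⁻ in which the path x⁻ ⤳ x⁺ has weight 2k+1 (so the path
x⁺ ⤳ x⁻ has weight -2k-1), then φ entails 0 ≤ x + k and 0 ≤ -x - k - 1 over ℤ,
hence φ is ℤ-unsatisfiable. -/
theorem stmt_13 {V : Type*} (P S N : Finset (V × V × ℤ)) (U Lo : Finset (V × ℤ))
    (x : V) (k : ℤ) (n₁ n₂ : ℕ)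
    (q₁ : Fin (n₁ + 1) → V ⊕ V) (w₁ : Fin n₁ → ℤ)
    (q₂ : Fin (n₂ + 1) → V ⊕ V) (w₂ : Fin n₂ → ℤ)
    (hp₁ : IsEPath (UTVPIEdge P S N U Lo) n₁ q₁ w₁)
    (hp₂ : IsEPath (UTVPIEdge P S N U Lo) n₂ q₂ w₂)
    (hs₁ : q₁ 0 = Sum.inr x) (he₁ : q₁ (Fin.last n₁) = Sum.inl x)
    (hs₂ : q₂ 0 = Sum.inl x) (he₂ : q₂ (Fin.last n₂) = Sum.inr x)
    (hw₁ : (∑ i, w₁ i) = 2 * k + 1)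
    (hzero : (∑ i, w₁ i) + (∑ i, w₂ i) = 0) :
    (∀ μ : V → ℤ, UTVPISatZ P S N U Lo μ → 0 ≤ μ x + k) ∧
    (∀ μ : V → ℤ, UTVPISatZ P S N U Lo μ → 0 ≤ -μ x - k - 1) ∧
    ¬ ∃ μ : V → ℤ, UTVPISatZ P S N U Lo μ := by
  have key : ∀ μ : V → ℤ, UTVPISatZ P S N U Lo μ → (0 ≤ μ x + k) ∧ (0 ≤ -μ x - k - 1) := by
    intro μ h
    have h1 := path_sound P S N U Lo μ h n₁ q₁ w₁ hp₁
    have h2 := path_sound P S N U Lo μ h n₂ q₂ w₂ hp₂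
    rw [hs₁, he₁, hw₁] at h1
    rw [hs₂, he₂] at h2
    have hw₂ : (∑ i, w₂ i) = -(2 * k + 1) := by linarith [hw₁, hzero]
    rw [hw₂] at h2
    simp only [Ups] at h1 h2
    constructor <;> omega
  refine ⟨fun μ h => (key μ h).1, fun μ h => (key μ h).2, ?_⟩
  rintro ⟨μ, h⟩
  obtain ⟨a, b⟩ := key μ h
  omega
end

section
/- A theory T is convex when for all sets of T-literals L and variable equalities e₁,...,eₙ, L ⊨_T e₁ ∨ ... ∨ eₙ implies L ⊨_T eᵢ for some i. The theory of linear rational arithmetic (conjunctions of weak linear inequalities over ℚ) is convex: if a satisfiable set L of weak linear inequalities entails a disjunction of equalities between variables, it entails one of the disjuncts. -/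
/-- Convexity of linear rational arithmetic: if a satisfiable finite set L of weak
affine inequalities 0 ≤ Σⱼ aᵢⱼ xⱼ + bᵢ entails a disjunction of equalities between
variables, then it entails one of the disjuncts. -/
theorem stmt_14 (p m n : ℕ) (a : Fin p → Fin m → ℚ) (b : Fin p → ℚ)
    (e : Fin n → Fin m × Fin m)
    (hsat : ∃ μ : Fin m → ℚ, ∀ i, 0 ≤ (∑ j, a i j * μ j) + b i)
    (hent : ∀ μ : Fin m → ℚ, (∀ i, 0 ≤ (∑ j, a i j * μ j) + b i) →
      ∃ i, μ (e i).1 = μ (e i).2) :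
    ∃ i, ∀ μ : Fin m → ℚ, (∀ i', 0 ≤ (∑ j, a i' j * μ j) + b i') →
      μ (e i).1 = μ (e i).2 := by
  classical
  set Sat : (Fin m → ℚ) → Prop := fun μ => ∀ i, 0 ≤ (∑ j, a i j * μ j) + b i with hSat
  set g : Fin n → (Fin m → ℚ) → ℚ := fun i μ => μ (e i).1 - μ (e i).2 with hg
  -- key lemma: convex set not covered by finitely many hyperplanes
  have key : ∀ s : Finset (Fin n), (∀ i ∈ s, ∃ μ, Sat μ ∧ g i μ ≠ 0) →
      ∃ μ, Sat μ ∧ ∀ i ∈ s, g i μ ≠ 0 := by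
    intro s
    induction s using Finset.induction_on with
    | empty =>
      intro _
      obtain ⟨μ, hμ⟩ := hsat
      exact ⟨μ, hμ, by simp⟩
    | @insert i s his ih =>
      intro h
      obtain ⟨μ, hμSat, hμ⟩ := ih (fun j hj => h j (Finset.mem_insert_of_mem hj))
      obtain ⟨ν, hνSat, hν⟩ := h i (Finset.mem_insert_self i s)
      by_cases hgi : g i μ ≠ 0
      · exact ⟨μ, hμSat, fun j hj => by
          rcases Finset.mem_insert.mp hj with rfl | hj
          · exact hgi
          · exact hμ j hj⟩
      push_neg at hgi
      -- choose t in (0,1) avoiding bad values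
      set bad : Finset ℚ := s.image (fun j => g j μ / (g j μ - g j ν)) with hbad
      obtain ⟨t, htIoo, htbad⟩ :=
        (Set.Ioo_infinite (show (0:ℚ) < 1 by norm_num)).exists_notMem_finset bad
      obtain ⟨ht0, ht1⟩ := htIoo
      set μ' : Fin m → ℚ := fun x => (1 - t) * μ x + t * ν x with hμ'
      have hcomb : ∀ i' : Fin p,
          (∑ j, a i' j * μ' j) + b i'
            = (1 - t) * ((∑ j, a i' j * μ j) + b i') + t * ((∑ j, a i' j * ν j) + b i') := by
        intro i'
        have e1 : ∑ j, a i' j * μ' j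
            = ∑ j, ((1 - t) * (a i' j * μ j) + t * (a i' j * ν j)) :=
          Finset.sum_congr rfl (fun j _ => by simp only [hμ']; ring)
        rw [e1, Finset.sum_add_distrib, ← Finset.mul_sum, ← Finset.mul_sum]
        ring
      have hμ'Sat : Sat μ' := by
        intro i'
        rw [hcomb i']
        have := hμSat i'
        have := hνSat i'
        have h1t : (0:ℚ) ≤ 1 - t := by linarith
        nlinarith
      have hglin : ∀ j, g j μ' = (1 - t) * g j μ + t * g j ν := by
        intro j
        simp only [hg, hμ']
        ring
      refine ⟨μ', hμ'Sat, ?_⟩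
      intro j hj
      rcases Finset.mem_insert.mp hj with rfl | hj
      · rw [hglin, hgi]
        intro hzero
        have : t * g j ν = 0 := by linarith
        rcases mul_eq_zero.mp this with h | h
        · exact absurd h (ne_of_gt ht0)
        · exact hν h
      · rw [hglin]
        intro hzero
        have hA : g j μ ≠ 0 := hμ j hj
        have hAB : g j μ - g j ν ≠ 0 := by
          intro h
          have : g j ν = g j μ := by linarith
          rw [this] at hzero
          apply hA
          linarith [hzero]
        have : t = g j μ / (g j μ - g j ν) := by
          field_simp
          linarith [hzero]
        apply htbad
        rw [this]
        exact Finset.mem_image_of_mem _ hj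
  by_contra hcon
  push_neg at hcon
  have hall : ∀ i ∈ Finset.univ, ∃ μ, Sat μ ∧ g i μ ≠ 0 := by
    intro i _
    obtain ⟨μ, hμSat, hμne⟩ := hcon i
    exact ⟨μ, hμSat, sub_ne_zero_of_ne hμne⟩
  obtain ⟨μ, hμSat, hμ⟩ := key Finset.univ hall
  obtain ⟨i, hi⟩ := hent μ hμSat
  exact hμ i (Finset.mem_univ i) (sub_eq_zero_of_eq hi)
end

section
/- Suppose A ⊨ I_ε and I_ε ∧ B ⊨ ⊥ hold over ℚ for all sufficiently small ε > 0, where I_ε = (0 ≤ t - c·ε) with c > 0 and t an affine term not involving ε, and where A, B do not mention ε. Then I = (0 < t) satisfies A ⊨ I and I ∧ B ⊨ ⊥. -/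
/-- From an ε-parametric interpolant I_ε = (0 ≤ t - cε), c > 0, with A ⊨ I_ε for
some small ε > 0 (per model) and I_ε ∧ B unsatisfiable for every ε > 0, the formula
I = (0 < t) satisfies A ⊨ I and I ∧ B ⊨ ⊥. -/
theorem stmt_15 {V : Type*} (A B : (V → ℚ) → Prop) (t : (V → ℚ) → ℚ) (c : ℚ)
    (hc : 0 < c)
    (hA : ∀ μ, A μ → ∃ δ : ℚ, 0 < δ ∧ 0 ≤ t μ - c * δ)
    (hB : ∀ δ : ℚ, 0 < δ → ∀ μ, ¬ (B μ ∧ 0 ≤ t μ - c * δ)) :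
    (∀ μ, A μ → 0 < t μ) ∧ (∀ μ, ¬ (0 < t μ ∧ B μ)) := by
  constructor
  · intro μ hμ
    obtain ⟨δ, hδ, h⟩ := hA μ hμ
    nlinarith
  · rintro μ ⟨ht, hb⟩
    exact hB (t μ / (2 * c)) (by positivity) μ ⟨hb, by
      have : t μ - c * (t μ / (2 * c)) = t μ / 2 := by field_simp; ring
      rw [this]; positivity⟩
end
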